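/- Let K be an infinite field. The image of any multilinear polynomial f(x₁,…,xₙ) = Σ_{σ ∈ Sₙ} α_σ x_{σ(1)}⋯x_{σ(n)} on the algebra UT₃(K) of 3×3 upper triangular matrices is exactly one of: {0}, J², J, or UT₃(K), where J is the set of strictly upper triangular 3×3 matrices. -/

import Mathlib

open Matrix

/-- Upper triangular n×n matrices (as a set). -/
def UTset (n : ℕ) (K : Type*) [Ring K] : Set (Matrix (Fin n) (Fin n) K) :=
  {A | ∀ i j : Fin n, j < i → A i j = 0}

/-- The k-th power Jᵏ of the strictly upper triangular ideal:
matrices whose (i,j) entry vanishes unless j ≥ i + k. -/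
def Jset (n : ℕ) (K : Type*) [Ring K] (k : ℕ) : Set (Matrix (Fin n) (Fin n) K) :=
  {A | ∀ i j : Fin n, (j : ℕ) < (i : ℕ) + k → A i j = 0}

/-- Evaluation of the multilinear polynomial ∑_σ α_σ x_{σ(1)}⋯x_{σ(n)}. -/
def mlEval {K A : Type*} [CommSemiring K] [Ring A] [Algebra K A] {n : ℕ}
    (α : Equiv.Perm (Fin n) → K) (a : Fin n → A) : A :=
  ∑ σ : Equiv.Perm (Fin n), α σ • (List.ofFn fun i => a (σ i)).prod

/-- Image of a multilinear polynomial on a subset S of an algebra. -/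
def mlImage {K A : Type*} [CommSemiring K] [Ring A] [Algebra K A] {n : ℕ}
    (α : Equiv.Perm (Fin n) → K) (S : Set A) : Set A :=
  {x | ∃ a : Fin n → A, (∀ i, a i ∈ S) ∧ x = mlEval α a}

section PROOFDEV
section basic
variable {K : Type*} [Field K] {w : ℕ}

lemma ut_one : (1 : Matrix (Fin w) (Fin w) K) ∈ UTset w K := by
  intro i j hij
  exact Matrix.one_apply_ne (ne_of_gt hij)

lemma ut_mul {A B : Matrix (Fin w) (Fin w) K} (hA : A ∈ UTset w K) (hB : B ∈ UTset w K) :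
    A * B ∈ UTset w K := by
  intro i j hij
  rw [Matrix.mul_apply]
  refine Finset.sum_eq_zero fun b _ => ?_
  rcases lt_or_ge b i with h | h
  · rw [hA i b h, zero_mul]
  · rw [hB b j (lt_of_lt_of_le hij h), mul_zero]

lemma ut_listprod {L : List (Matrix (Fin w) (Fin w) K)} (h : ∀ A ∈ L, A ∈ UTset w K) :
    L.prod ∈ UTset w K := by
  induction L with
  | nil => simpa using ut_one
  | cons A L ih =>
    rw [List.prod_cons]
    exact ut_mul (h A (List.mem_cons_self)) (ih fun B hB => h B (List.mem_cons_of_mem _ hB))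

lemma ut_smul {A : Matrix (Fin w) (Fin w) K} (c : K) (hA : A ∈ UTset w K) :
    c • A ∈ UTset w K := fun i j hij => by
  rw [Matrix.smul_apply, hA i j hij, smul_zero]

lemma mlEval_mem_UT {n : ℕ} {α : Equiv.Perm (Fin n) → K} {a : Fin n → Matrix (Fin w) (Fin w) K}
    (ha : ∀ i, a i ∈ UTset w K) : mlEval α a ∈ UTset w K := by
  intro i j hij
  rw [mlEval, Matrix.sum_apply]
  refine Finset.sum_eq_zero fun σ _ => ?_
  rw [Matrix.smul_apply]
  have : (List.ofFn fun i => a (σ i)).prod ∈ UTset w K := by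
    refine ut_listprod fun B hB => ?_
    rcases List.mem_ofFn.1 hB with ⟨m, rfl⟩
    exact ha _
  rw [this i j hij, smul_zero]

-- diagonal entries
lemma diag_mul {A B : Matrix (Fin w) (Fin w) K} (hA : A ∈ UTset w K) (hB : B ∈ UTset w K)
    (j : Fin w) : (A * B) j j = A j j * B j j := by
  rw [Matrix.mul_apply]
  rw [Finset.sum_eq_single j]
  · intro b _ hb
    rcases lt_or_ge b j with h | h
    · rw [hA j b h, zero_mul]
    · rw [hB b j (lt_of_le_of_ne h (Ne.symm hb)), mul_zero]
  · simp

lemma listprod_diag {L : List (Matrix (Fin w) (Fin w) K)} (h : ∀ A ∈ L, A ∈ UTset w K)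
    (j : Fin w) : L.prod j j = (L.map (fun A => A j j)).prod := by
  induction L with
  | nil => simp [Matrix.one_apply_eq]
  | cons A L ih =>
    rw [List.prod_cons, diag_mul (h A (List.mem_cons_self))
      (ut_listprod fun B hB => h B (List.mem_cons_of_mem _ hB)),
      List.map_cons, List.prod_cons, ih fun B hB => h B (List.mem_cons_of_mem _ hB)]

lemma mlEval_diag {n : ℕ} {α : Equiv.Perm (Fin n) → K} {a : Fin n → Matrix (Fin w) (Fin w) K}
    (ha : ∀ i, a i ∈ UTset w K) (j : Fin w) :
    (mlEval α a) j j = (∑ σ : Equiv.Perm (Fin n), α σ) * ∏ i, a i j j := by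
  rw [mlEval, Matrix.sum_apply, Finset.sum_mul]
  refine Finset.sum_congr rfl fun σ _ => ?_
  rw [Matrix.smul_apply, smul_eq_mul]
  congr 1
  have h1 : (List.ofFn fun i => a (σ i)).prod j j
      = ((List.ofFn fun i => a (σ i)).map (fun A => A j j)).prod := by
    refine listprod_diag (fun B hB => ?_) j
    rcases List.mem_ofFn.1 hB with ⟨m, rfl⟩
    exact ha _
  rw [h1, List.map_ofFn, List.prod_ofFn]
  exact Equiv.prod_comp σ (fun i => a i j j)

end basic

section slot
variable {K A : Type*} [CommSemiring K] [Ring A] [Algebra K A] {n : ℕ}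

lemma ofFn_comp_update (a : Fin n → A) (k : Fin n) (X : A) (σ : Equiv.Perm (Fin n)) :
    (List.ofFn fun i => Function.update a k X (σ i))
      = (List.ofFn fun i => a (σ i)).set (σ⁻¹ k) X := by
  apply List.ext_getElem
  · simp
  · intro m h1 h2
    simp only [List.getElem_ofFn, List.getElem_set]
    rw [List.length_ofFn] at h1
    by_cases hm : ((σ⁻¹ k : Fin n) : ℕ) = m
    · simp only [if_pos hm]
      have : σ ⟨m, h1⟩ = k := by
        have : (⟨m, h1⟩ : Fin n) = σ⁻¹ k := by ext; exact hm.symm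
        rw [this]; simp
      rw [Function.update_apply, if_pos this]
    · simp only [if_neg hm]
      have : σ ⟨m, h1⟩ ≠ k := by
        intro hc
        apply hm
        have : (⟨m, h1⟩ : Fin n) = σ⁻¹ k := by rw [← hc]; simp
        rw [← this]
      rw [Function.update_apply, if_neg this]

lemma prod_ofFn_update (a : Fin n → A) (k : Fin n) (X : A) (σ : Equiv.Perm (Fin n)) :
    (List.ofFn fun i => Function.update a k X (σ i)).prod
      = ((List.ofFn fun i => a (σ i)).take (σ⁻¹ k)).prod * X *
        ((List.ofFn fun i => a (σ i)).drop ((σ⁻¹ k : ℕ) + 1)).prod := by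
  rw [ofFn_comp_update, List.prod_set]
  congr 2
  rw [if_pos]
  simp [Fin.is_lt]

lemma mlEval_update_add (α : Equiv.Perm (Fin n) → K) (a : Fin n → A) (k : Fin n) (X Y : A) :
    mlEval α (Function.update a k (X + Y))
      = mlEval α (Function.update a k X) + mlEval α (Function.update a k Y) := by
  rw [mlEval, mlEval, mlEval, ← Finset.sum_add_distrib]
  refine Finset.sum_congr rfl fun σ _ => ?_
  rw [prod_ofFn_update, prod_ofFn_update, prod_ofFn_update, ← smul_add]
  rw [mul_add, add_mul]

lemma mlEval_update_smul (α : Equiv.Perm (Fin n) → K) (a : Fin n → A) (k : Fin n) (c : K) (X : A) :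
    mlEval α (Function.update a k (c • X)) = c • mlEval α (Function.update a k X) := by
  rw [mlEval, mlEval, Finset.smul_sum]
  refine Finset.sum_congr rfl fun σ _ => ?_
  rw [prod_ofFn_update, prod_ofFn_update, smul_comm]
  congr 1
  rw [mul_smul_comm, smul_mul_assoc]

lemma prod_ofFn_single_one (k : Fin n) (X : A) :
    (List.ofFn fun j => if j = k then X else (1:A)).prod = X := by
  induction n with
  | zero => exact absurd k.2 (Nat.not_lt_zero _)
  | succ m ih =>
    rw [List.ofFn_succ, List.prod_cons]
    rcases Fin.eq_zero_or_eq_succ k with hk | ⟨p, hk⟩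
    · subst hk
      simp only [if_pos rfl]
      have : (List.ofFn fun i : Fin m => if Fin.succ i = (0 : Fin (m+1)) then X else (1:A)).prod
          = 1 := by
        have : (fun i : Fin m => if Fin.succ i = (0 : Fin (m+1)) then X else (1:A))
            = fun _ => (1:A) := by
          funext i; rw [if_neg (Fin.succ_ne_zero i)]
        rw [this]
        simp [List.prod_ofFn]
      rw [this, mul_one]
      simp
    · subst hk
      have h0 : ((0 : Fin (m+1)) = p.succ) = False := by
        simp [(Fin.succ_ne_zero p).symm]
      simp only [h0, if_false]
      have : (fun i : Fin m => if Fin.succ i = Fin.succ p then X else (1:A))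
          = fun i : Fin m => if i = p then X else (1:A) := by
        funext i
        by_cases h : i = p
        · subst h; simp
        · rw [if_neg h, if_neg (fun hc => h (Fin.succ_injective _ hc))]
      rw [this, ih p, one_mul]

lemma mlEval_single (α : Equiv.Perm (Fin n) → K) (k : Fin n) (X : A) :
    mlEval α (fun j => if j = k then X else 1)
      = (∑ σ : Equiv.Perm (Fin n), α σ) • X := by
  rw [mlEval, Finset.sum_smul]
  refine Finset.sum_congr rfl fun σ _ => ?_
  congr 1
  have : (fun i => if σ i = k then X else (1:A)) = fun i => if i = σ⁻¹ k then X else (1:A) := by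
    funext i
    congr 1
    rw [eq_iff_iff]
    constructor
    · intro h; rw [← h]; simp
    · intro h; rw [h]; simp
  simp only [this]
  exact prod_ofFn_single_one _ _

end slot

section two
variable {R : Type*} [CommRing R]

lemma u2_mul {A B : Matrix (Fin 2) (Fin 2) R} (hA : A 1 0 = 0) (hB : B 1 0 = 0) :
    (A * B) 1 0 = 0 := by
  rw [Matrix.mul_apply, Fin.sum_univ_two, hA, hB]
  ring

lemma u2_listprod {L : List (Matrix (Fin 2) (Fin 2) R)} (h : ∀ A ∈ L, A 1 0 = 0) :
    L.prod 1 0 = 0 := by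
  induction L with
  | nil => simp [Matrix.one_apply]
  | cons A L ih =>
    rw [List.prod_cons]
    exact u2_mul (h A (List.mem_cons_self))
      (ih fun B hB => h B (List.mem_cons_of_mem _ hB))

lemma sandwich {N1 P N2 : Matrix (Fin 2) (Fin 2) R}
    (h1 : N1 0 0 = 0) (h2 : N1 1 0 = 0) (h3 : N1 1 1 = 0) (h4 : P 1 0 = 0)
    (h5 : N2 0 0 = 0) (h6 : N2 1 0 = 0) (h7 : N2 1 1 = 0) : N1 * P * N2 = 0 := by
  ext i j
  fin_cases i <;> fin_cases j <;>
    simp [Matrix.mul_apply, Fin.sum_univ_two, h1, h2, h3, h4, h5, h6, h7]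

/-- strictly upper 2×2 -/
def strict2 (A : Matrix (Fin 2) (Fin 2) R) : Prop := A 0 0 = 0 ∧ A 1 0 = 0 ∧ A 1 1 = 0

lemma list_two_strict {L : List (Matrix (Fin 2) (Fin 2) R)} (hL : ∀ A ∈ L, A 1 0 = 0)
    {p q : ℕ} (hpq : p < q) (hq : q < L.length)
    (hp1 : strict2 (L[p]'(lt_trans hpq hq))) (hq1 : strict2 (L[q]'hq)) : L.prod = 0 := by
  have hp : p < L.length := lt_trans hpq hq
  have e1 : L.prod = (L.take p).prod * (L.drop p).prod := (List.prod_take_mul_prod_drop L p).symm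
  rw [List.drop_eq_getElem_cons hp, List.prod_cons] at e1
  have hq2 : q - (p+1) < (L.drop (p+1)).length := by
    rw [List.length_drop]
    omega
  have e2 : (L.drop (p+1)).prod
      = ((L.drop (p+1)).take (q - (p+1))).prod * ((L.drop (p+1)).drop (q - (p+1))).prod :=
    (List.prod_take_mul_prod_drop _ _).symm
  have e3 : (L.drop (p+1)).drop (q - (p+1)) = L.drop q := by
    rw [List.drop_drop]
    congr 1
    omega
  rw [e3, List.drop_eq_getElem_cons hq, List.prod_cons] at e2
  have hmid : ((L.drop (p+1)).take (q - (p+1))).prod 1 0 = 0 := by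
    refine u2_listprod fun B hB => hL B ?_
    exact List.drop_subset _ _ (List.take_subset _ _ hB)
  have key : (L[p]'hp) * (((L.drop (p+1)).take (q - (p+1))).prod * ((L[q]'hq) * (L.drop (q+1)).prod))
      = 0 := by
    rw [← mul_assoc, ← mul_assoc,
      sandwich hp1.1 hp1.2.1 hp1.2.2 hmid hq1.1 hq1.2.1 hq1.2.2, zero_mul]
  rw [e1, e2, key, mul_zero]

variable {K : Type*} [CommSemiring K] [Algebra K R] {n : ℕ}

lemma mlEval_two_strict (α : Equiv.Perm (Fin n) → K) {c : Fin n → Matrix (Fin 2) (Fin 2) R}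
    (hc : ∀ i, c i 1 0 = 0) {j k : Fin n} (hjk : j ≠ k)
    (hj : strict2 (c j)) (hk : strict2 (c k)) : mlEval α c = 0 := by
  rw [mlEval]
  refine Finset.sum_eq_zero fun σ _ => ?_
  have hmem : ∀ A ∈ List.ofFn fun i => c (σ i), A 1 0 = 0 := by
    intro A hA
    rcases List.mem_ofFn.1 hA with ⟨m, rfl⟩
    exact hc _
  have hget : ∀ (m : ℕ) (hm : m < (List.ofFn fun i => c (σ i)).length),
      ((List.ofFn fun i => c (σ i))[m]'hm) = c (σ ⟨m, by simpa using hm⟩) := by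
    intro m hm
    simp [List.getElem_ofFn]
  have len : (List.ofFn fun i => c (σ i)).length = n := by simp
  set p : Fin n := σ⁻¹ j with hp
  set q : Fin n := σ⁻¹ k with hq
  have hpq : p ≠ q := by
    simp [hp, hq]
    intro h
    exact hjk (by simpa using congrArg σ h)
  have hsp : ∀ (m : Fin n), σ m = j → strict2 ((List.ofFn fun i => c (σ i))[(m:ℕ)]'(by simp)) := by
    intro m hm
    rw [hget _ _]
    simpa [Fin.eta, hm] using hj
  have hsq : ∀ (m : Fin n), σ m = k → strict2 ((List.ofFn fun i => c (σ i))[(m:ℕ)]'(by simp)) := by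
    intro m hm
    rw [hget _ _]
    simpa [Fin.eta, hm] using hk
  have hpj : σ p = j := by simp [hp]
  have hqk : σ q = k := by simp [hq]
  rcases lt_or_gt_of_ne (fun h => hpq (Fin.ext h) : (p:ℕ) ≠ (q:ℕ)) with h | h
  · rw [list_two_strict hmem h (by simp [len]) (hsp p hpj) (hsq q hqk), smul_zero]
  · rw [list_two_strict hmem h (by simp [len]) (hsq q hqk) (hsp p hpj), smul_zero]

end two

section psisec
variable {K : Type*} [CommSemiring K] {R : Type*} [CommRing R] [Algebra K R] {n : ℕ}

def E01 (R : Type*) [CommRing R] : Matrix (Fin 2) (Fin 2) R := !![0,1;0,0]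

def diag2 {R : Type*} [CommRing R] (d e : R) : Matrix (Fin 2) (Fin 2) R := !![d,0;0,e]

/-- the basic coefficient function -/
def psi (α : Equiv.Perm (Fin n) → K) (k : Fin n) (d e : Fin n → R) : R :=
  (mlEval α (fun i => if i = k then E01 R else diag2 (d i) (e i))) 0 1

lemma psi_congr (α : Equiv.Perm (Fin n) → K) (k : Fin n) {d e d' e' : Fin n → R}
    (h : ∀ i, i ≠ k → d i = d' i ∧ e i = e' i) : psi α k d e = psi α k d' e' := by
  unfold psi
  have : (fun i => if i = k then E01 R else diag2 (d i) (e i))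
      = (fun i => if i = k then E01 R else diag2 (d' i) (e' i)) := by
    funext i
    by_cases hik : i = k
    · simp [hik]
    · simp [hik, (h i hik).1, (h i hik).2]
  rw [this]
end psisec

section lemCsec
variable {K : Type*} [CommSemiring K] {R : Type*} [CommRing R] [Algebra K R] {n : ℕ}

@[simp] lemma E01_00 : (E01 R) 0 0 = 0 := by simp [E01]
@[simp] lemma E01_01 : (E01 R) 0 1 = 1 := by simp [E01]
@[simp] lemma E01_10 : (E01 R) 1 0 = 0 := by simp [E01]
@[simp] lemma E01_11 : (E01 R) 1 1 = 0 := by simp [E01]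
@[simp] lemma diag2_00 (d e : R) : (diag2 d e) 0 0 = d := by simp [diag2]
@[simp] lemma diag2_01 (d e : R) : (diag2 d e) 0 1 = 0 := by simp [diag2]
@[simp] lemma diag2_10 (d e : R) : (diag2 d e) 1 0 = 0 := by simp [diag2]
@[simp] lemma diag2_11 (d e : R) : (diag2 d e) 1 1 = e := by simp [diag2]

lemma strict2_smul (x : R) : strict2 (x • E01 R) := by
  refine ⟨?_, ?_, ?_⟩ <;> simp

lemma strict2_E01 : strict2 (E01 R) := by
  refine ⟨?_, ?_, ?_⟩ <;> simp

lemma d2_prod01 {L : List (Matrix (Fin 2) (Fin 2) R)}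
    (h : ∀ A ∈ L, A 1 0 = 0 ∧ A 0 1 = 0) : L.prod 0 1 = 0 := by
  induction L with
  | nil => simp [Matrix.one_apply]
  | cons A L ih =>
    rw [List.prod_cons, Matrix.mul_apply, Fin.sum_univ_two]
    rw [(h A (List.mem_cons_self)).2, ih fun B hB => h B (List.mem_cons_of_mem _ hB)]
    ring

lemma mlEval_update_smulR (α : Equiv.Perm (Fin n) → K)
    (a : Fin n → Matrix (Fin 2) (Fin 2) R) (k : Fin n) (c : R)
    (X : Matrix (Fin 2) (Fin 2) R) :
    mlEval α (Function.update a k (c • X)) = c • mlEval α (Function.update a k X) := by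
  rw [mlEval, mlEval, Finset.smul_sum]
  refine Finset.sum_congr rfl fun σ _ => ?_
  rw [prod_ofFn_update, prod_ofFn_update, mul_smul_comm, smul_mul_assoc, smul_comm]

lemma decomp2 {b : Fin n → Matrix (Fin 2) (Fin 2) R} (j : Fin n) (h10 : ∀ i, b i 1 0 = 0) :
    b = Function.update b j (diag2 (b j 0 0) (b j 1 1) + (b j 0 1) • E01 R) := by
  have hbj : b j = diag2 (b j 0 0) (b j 1 1) + (b j 0 1) • E01 R := by
    ext x y
    fin_cases x <;> fin_cases y <;> simp [h10 j]
  rw [← hbj, Function.update_eq_self]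

lemma lemC2 (α : Equiv.Perm (Fin n) → K) (k : Fin n) :
    ∀ t : Finset (Fin n), ∀ b : Fin n → Matrix (Fin 2) (Fin 2) R,
    (∀ i, b i 1 0 = 0) → b k = E01 R → (∀ i ∉ t, i ≠ k → b i 0 1 = 0) →
    (mlEval α b) 0 1 = psi α k (fun i => b i 0 0) (fun i => b i 1 1) := by
  intro t
  induction t using Finset.induction_on with
  | empty =>
    intro b h10 hk hsupp
    have : b = fun i => if i = k then E01 R
        else diag2 ((fun i => b i 0 0) i) ((fun i => b i 1 1) i) := by
      funext i
      by_cases hik : i = k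
      · simp [hik, hk]
      · simp only [if_neg hik]
        ext x y
        fin_cases x <;> fin_cases y <;>
          simp [h10 i, hsupp i (Finset.notMem_empty i) hik]
    rw [psi, ← this]
  | @insert j t hj ih =>
    intro b h10 hk hsupp
    by_cases hjk : j = k
    · subst hjk
      exact ih b h10 hk fun i hit hik =>
        hsupp i (fun hmem => (Finset.mem_insert.1 hmem).elim hik hit) hik
    · set Dj : Matrix (Fin 2) (Fin 2) R := diag2 (b j 0 0) (b j 1 1) with hDj
      have h10' : ∀ i, Function.update b j Dj i 1 0 = 0 := by
        intro i
        by_cases hij : i = j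
        · subst hij; simp [hDj]
        · rw [Function.update_of_ne hij]; exact h10 i
      have hk' : Function.update b j Dj k = E01 R := by
        rw [Function.update_of_ne (Ne.symm hjk), hk]
      have hsupp' : ∀ i ∉ t, i ≠ k → Function.update b j Dj i 0 1 = 0 := by
        intro i hit hik
        by_cases hij : i = j
        · subst hij; simp [hDj]
        · rw [Function.update_of_ne hij]
          exact hsupp i (fun hmem => (Finset.mem_insert.1 hmem).elim hij hit) hik
      have T1 : (mlEval α (Function.update b j Dj)) 0 1
          = psi α k (fun i => b i 0 0) (fun i => b i 1 1) := by
        rw [ih _ h10' hk' hsupp']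
        refine psi_congr α k fun i _ => ?_
        by_cases hij : i = j
        · subst hij; simp [hDj]
        · rw [Function.update_of_ne hij]; exact ⟨rfl, rfl⟩
      have T2 : mlEval α (Function.update b j ((b j 0 1) • E01 R)) = 0 := by
        refine mlEval_two_strict α (fun i => ?_) hjk ?_ ?_
        · by_cases hij : i = j
          · subst hij; simp
          · rw [Function.update_of_ne hij]; exact h10 i
        · rw [Function.update_self]; exact strict2_smul _
        · rw [Function.update_of_ne (Ne.symm hjk), hk]; exact strict2_E01
      conv_lhs => rw [decomp2 j h10]
      rw [mlEval_update_add, Matrix.add_apply, T1, T2, Matrix.zero_apply, add_zero]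

lemma lemC (α : Equiv.Perm (Fin n) → K) :
    ∀ t : Finset (Fin n), ∀ a : Fin n → Matrix (Fin 2) (Fin 2) R,
    (∀ i, a i 1 0 = 0) → (∀ i ∉ t, a i 0 1 = 0) →
    (mlEval α a) 0 1
      = ∑ k ∈ t, a k 0 1 * psi α k (fun i => a i 0 0) (fun i => a i 1 1) := by
  intro t
  induction t using Finset.induction_on with
  | empty =>
    intro a h10 hsupp
    rw [Finset.sum_empty, mlEval, Matrix.sum_apply]
    refine Finset.sum_eq_zero fun σ _ => ?_
    rw [Matrix.smul_apply]
    have : (List.ofFn fun i => a (σ i)).prod 0 1 = 0 := by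
      refine d2_prod01 fun B hB => ?_
      rcases List.mem_ofFn.1 hB with ⟨m, rfl⟩
      exact ⟨h10 _, hsupp _ (Finset.notMem_empty _)⟩
    rw [this, smul_zero]
  | @insert k t hk ih =>
    intro a h10 hsupp
    set Dk : Matrix (Fin 2) (Fin 2) R := diag2 (a k 0 0) (a k 1 1) with hDk
    have h10' : ∀ i, Function.update a k Dk i 1 0 = 0 := by
      intro i
      by_cases hik : i = k
      · subst hik; simp [hDk]
      · rw [Function.update_of_ne hik]; exact h10 i
    have hsupp' : ∀ i ∉ t, Function.update a k Dk i 0 1 = 0 := by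
      intro i hit
      by_cases hik : i = k
      · subst hik; simp [hDk]
      · rw [Function.update_of_ne hik]
        exact hsupp i fun hmem => hit ((Finset.mem_insert.1 hmem).resolve_left hik)
    have T1 : (mlEval α (Function.update a k Dk)) 0 1
        = ∑ j ∈ t, a j 0 1 * psi α j (fun i => a i 0 0) (fun i => a i 1 1) := by
      rw [ih _ h10' hsupp']
      refine Finset.sum_congr rfl fun j hjt => ?_
      have hjk : j ≠ k := fun h => hk (h ▸ hjt)
      rw [Function.update_of_ne hjk]
      congr 1
      refine psi_congr α j fun i _ => ?_
      by_cases hik : i = k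
      · subst hik; simp [hDk]
      · rw [Function.update_of_ne hik]; exact ⟨rfl, rfl⟩
    have h10'' : ∀ i, Function.update a k (E01 R) i 1 0 = 0 := by
      intro i
      by_cases hik : i = k
      · subst hik; simp
      · rw [Function.update_of_ne hik]; exact h10 i
    have T2 : (mlEval α (Function.update a k ((a k 0 1) • E01 R))) 0 1
        = a k 0 1 * psi α k (fun i => a i 0 0) (fun i => a i 1 1) := by
      rw [mlEval_update_smulR, Matrix.smul_apply, smul_eq_mul]
      congr 1
      rw [lemC2 α k Finset.univ (Function.update a k (E01 R)) h10''
        (by rw [Function.update_self]) (fun i hit _ => absurd (Finset.mem_univ i) hit)]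
      refine psi_congr α k fun i hik => ?_
      rw [Function.update_of_ne hik]
      exact ⟨rfl, rfl⟩
    conv_lhs => rw [decomp2 k h10]
    rw [mlEval_update_add, Matrix.add_apply, T1, T2, Finset.sum_insert hk, add_comm]

lemma lemC' (α : Equiv.Perm (Fin n) → K) (a : Fin n → Matrix (Fin 2) (Fin 2) R)
    (h10 : ∀ i, a i 1 0 = 0) :
    (mlEval α a) 0 1
      = ∑ k, a k 0 1 * psi α k (fun i => a i 0 0) (fun i => a i 1 1) :=
  lemC α Finset.univ a h10 fun i hit => absurd (Finset.mem_univ i) hit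

end lemCsec

section mapsec
variable {K : Type*} [CommSemiring K] {n : ℕ}

lemma mlEval_map {A B : Type*} [Ring A] [Ring B] [Algebra K A] [Algebra K B]
    (φ : A →ₐ[K] B) (α : Equiv.Perm (Fin n) → K) (a : Fin n → A) :
    φ (mlEval α a) = mlEval α (fun i => φ (a i)) := by
  rw [mlEval, mlEval, map_sum]
  refine Finset.sum_congr rfl fun σ _ => ?_
  rw [_root_.map_smul, map_list_prod, List.map_ofFn]
  rfl

lemma psi_algHom {R S : Type*} [CommRing R] [CommRing S] [Algebra K R] [Algebra K S]
    (φ : R →ₐ[K] S) (α : Equiv.Perm (Fin n) → K) (k : Fin n) (d e : Fin n → R) :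
    φ (psi α k d e) = psi α k (fun i => φ (d i)) (fun i => φ (e i)) := by
  unfold psi
  have h1 : φ ((mlEval α fun i => if i = k then E01 R else diag2 (d i) (e i)) 0 1)
      = (φ.mapMatrix (m := Fin 2) (mlEval α fun i => if i = k then E01 R else diag2 (d i) (e i)))
        0 1 := rfl
  rw [h1, mlEval_map]
  have h2 : (fun i => φ.mapMatrix (m := Fin 2) (if i = k then E01 R else diag2 (d i) (e i)))
      = fun i => if i = k then E01 S else diag2 (φ (d i)) (φ (e i)) := by
    funext i
    by_cases hik : i = k
    · simp only [if_pos hik]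
      ext x y
      fin_cases x <;> fin_cases y <;>
        simp [AlgHom.mapMatrix_apply, Matrix.map_apply]
    · simp only [if_neg hik]
      ext x y
      fin_cases x <;> fin_cases y <;>
        simp [AlgHom.mapMatrix_apply, Matrix.map_apply]
  rw [h2]
end mapsec

section polysec
variable {K : Type*} [Field K] [Infinite K] {n : ℕ}

lemma poly_step (α : Equiv.Perm (Fin n) → K) {k : Fin n} {d0 e0 : Fin n → K}
    (h : psi α k d0 e0 ≠ 0) :
    ∃ d e g : Fin n → K, psi α k d e ≠ 0 ∧ psi α k e g ≠ 0 ∧ psi α k d g ≠ 0 := by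
  classical
  have aeval_eq : ∀ (v : Fin 3 × Fin n → K) (p : MvPolynomial (Fin 3 × Fin n) K),
      MvPolynomial.aeval v p = MvPolynomial.eval v p := by
    intro v p
    rw [MvPolynomial.aeval_def, MvPolynomial.eval, MvPolynomial.eval₂Hom_congr rfl rfl rfl]
    rfl
  have key : ∀ (c1 c2 : Fin 3) (w1 w2 : Fin n → K) (v : Fin 3 × Fin n → K),
      (∀ i, v (c1, i) = w1 i) → (∀ i, v (c2, i) = w2 i) →
      MvPolynomial.eval v (psi α k (fun i => (MvPolynomial.X (c1, i) : MvPolynomial (Fin 3 × Fin n) K))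
        (fun i => MvPolynomial.X (c2, i))) = psi α k w1 w2 := by
    intro c1 c2 w1 w2 v hv1 hv2
    rw [← aeval_eq, psi_algHom]
    congr 1 <;> funext i <;> simp [hv1 i, hv2 i]
  set v1 : Fin 3 × Fin n → K := fun ci => if ci.1 = 0 then d0 ci.2 else e0 ci.2 with hv1
  set v2 : Fin 3 × Fin n → K := fun ci => if ci.1 = 1 then d0 ci.2 else e0 ci.2 with hv2
  have hde : (psi α k (fun i => (MvPolynomial.X (0, i) : MvPolynomial (Fin 3 × Fin n) K))
      (fun i => MvPolynomial.X (1, i))) ≠ 0 := by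
    intro h0
    apply h
    rw [← key 0 1 d0 e0 v1 (fun i => by simp [hv1]) (fun i => by simp [hv1]), h0, map_zero]
  have heg : (psi α k (fun i => (MvPolynomial.X (1, i) : MvPolynomial (Fin 3 × Fin n) K))
      (fun i => MvPolynomial.X (2, i))) ≠ 0 := by
    intro h0
    apply h
    rw [← key 1 2 d0 e0 v2 (fun i => by simp [hv2]) (fun i => by
      rw [hv2]
      simp only []
      rw [if_neg (by decide)]), h0, map_zero]
  have hdg : (psi α k (fun i => (MvPolynomial.X (0, i) : MvPolynomial (Fin 3 × Fin n) K))
      (fun i => MvPolynomial.X (2, i))) ≠ 0 := by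
    intro h0
    apply h
    rw [← key 0 2 d0 e0 v1 (fun i => by simp [hv1]) (fun i => by
      rw [hv1]
      simp only []
      rw [if_neg (by decide)]), h0, map_zero]
  have hQ := mul_ne_zero (mul_ne_zero hde heg) hdg
  have hex : ∃ v : Fin 3 × Fin n → K, MvPolynomial.eval v
      ((psi α k (fun i => (MvPolynomial.X (0, i) : MvPolynomial (Fin 3 × Fin n) K))
          (fun i => MvPolynomial.X (1, i))) *
        (psi α k (fun i => (MvPolynomial.X (1, i) : MvPolynomial (Fin 3 × Fin n) K))
          (fun i => MvPolynomial.X (2, i))) *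
        (psi α k (fun i => (MvPolynomial.X (0, i) : MvPolynomial (Fin 3 × Fin n) K))
          (fun i => MvPolynomial.X (2, i)))) ≠ 0 := by
    by_contra hc
    push_neg at hc
    exact hQ (MvPolynomial.funext fun x => by rw [hc x, map_zero])
  obtain ⟨v, hv⟩ := hex
  rw [_root_.map_mul, _root_.map_mul] at hv
  refine ⟨fun i => v (0, i), fun i => v (1, i), fun i => v (2, i), ?_, ?_, ?_⟩
  · rw [← key 0 1 (fun i => v (0, i)) (fun i => v (1, i)) v (fun i => rfl) (fun i => rfl)]
    intro h'
    exact hv (by rw [h']; ring)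
  · rw [← key 1 2 (fun i => v (1, i)) (fun i => v (2, i)) v (fun i => rfl) (fun i => rfl)]
    intro h'
    exact hv (by rw [h']; ring)
  · rw [← key 0 2 (fun i => v (0, i)) (fun i => v (2, i)) v (fun i => rfl) (fun i => rfl)]
    intro h'
    exact hv (by rw [h']; ring)
end polysec
section cornersec
variable {K : Type*} [Field K] {n : ℕ}

def cTL (A : Matrix (Fin 3) (Fin 3) K) : Matrix (Fin 2) (Fin 2) K :=
  !![A 0 0, A 0 1; 0, A 1 1]
def cBR (A : Matrix (Fin 3) (Fin 3) K) : Matrix (Fin 2) (Fin 2) K :=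
  !![A 1 1, A 1 2; 0, A 2 2]
def cO (A : Matrix (Fin 3) (Fin 3) K) : Matrix (Fin 2) (Fin 2) K :=
  !![A 0 0, A 0 2; 0, A 2 2]

lemma cTL_mul {A B : Matrix (Fin 3) (Fin 3) K} (hA : A ∈ UTset 3 K) (hB : B ∈ UTset 3 K) :
    cTL (A * B) = cTL A * cTL B := by
  have b10 := hB 1 0 (by decide)
  have b20 := hB 2 0 (by decide)
  have b21 := hB 2 1 (by decide)
  have a10 := hA 1 0 (by decide)
  ext x y
  fin_cases x <;> fin_cases y <;>
    simp [cTL, Matrix.mul_apply, Fin.sum_univ_three, Fin.sum_univ_two, b10, b20, b21, a10]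

lemma cBR_mul {A B : Matrix (Fin 3) (Fin 3) K} (hA : A ∈ UTset 3 K) (hB : B ∈ UTset 3 K) :
    cBR (A * B) = cBR A * cBR B := by
  have b10 := hB 1 0 (by decide)
  have b20 := hB 2 0 (by decide)
  have b21 := hB 2 1 (by decide)
  have a10 := hA 1 0 (by decide)
  have a21 := hA 2 1 (by decide)
  have a20 := hA 2 0 (by decide)
  ext x y
  fin_cases x <;> fin_cases y <;>
    simp [cBR, Matrix.mul_apply, Fin.sum_univ_three, Fin.sum_univ_two, b10, b20, b21, a10, a21, a20]

lemma cO_mulA {A B : Matrix (Fin 3) (Fin 3) K} (hA : A ∈ UTset 3 K) (hB : B ∈ UTset 3 K)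
    (hA12 : A 1 2 = 0) (hB12 : B 1 2 = 0) : cO (A * B) = cO A * cO B := by
  have b10 := hB 1 0 (by decide)
  have b20 := hB 2 0 (by decide)
  have b21 := hB 2 1 (by decide)
  have a10 := hA 1 0 (by decide)
  have a21 := hA 2 1 (by decide)
  have a20 := hA 2 0 (by decide)
  ext x y
  fin_cases x <;> fin_cases y <;>
    simp [cO, Matrix.mul_apply, Fin.sum_univ_three, Fin.sum_univ_two,
      b10, b20, b21, a10, a21, a20, hA12, hB12]

lemma cO_mulB {A B : Matrix (Fin 3) (Fin 3) K} (hA : A ∈ UTset 3 K) (hB : B ∈ UTset 3 K)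
    (hA01 : A 0 1 = 0) (hB01 : B 0 1 = 0) : cO (A * B) = cO A * cO B := by
  have b10 := hB 1 0 (by decide)
  have b20 := hB 2 0 (by decide)
  have b21 := hB 2 1 (by decide)
  have a10 := hA 1 0 (by decide)
  have a21 := hA 2 1 (by decide)
  have a20 := hA 2 0 (by decide)
  ext x y
  fin_cases x <;> fin_cases y <;>
    simp [cO, Matrix.mul_apply, Fin.sum_univ_three, Fin.sum_univ_two,
      b10, b20, b21, a10, a21, a20, hA01, hB01]

lemma cTL_one : cTL (1 : Matrix (Fin 3) (Fin 3) K) = 1 := by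
  ext x y
  fin_cases x <;> fin_cases y <;> simp [cTL, Matrix.one_apply]

lemma cBR_one : cBR (1 : Matrix (Fin 3) (Fin 3) K) = 1 := by
  ext x y
  fin_cases x <;> fin_cases y <;> simp [cBR, Matrix.one_apply]

lemma cO_one : cO (1 : Matrix (Fin 3) (Fin 3) K) = 1 := by
  ext x y
  fin_cases x <;> fin_cases y <;> simp [cO, Matrix.one_apply]

lemma cTL_prod {L : List (Matrix (Fin 3) (Fin 3) K)} (h : ∀ A ∈ L, A ∈ UTset 3 K) :
    cTL L.prod = (L.map cTL).prod := by
  induction L with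
  | nil => simpa using cTL_one
  | cons A L ih =>
    rw [List.prod_cons, List.map_cons, List.prod_cons,
      cTL_mul (h A (List.mem_cons_self))
        (ut_listprod fun B hB => h B (List.mem_cons_of_mem _ hB)),
      ih fun B hB => h B (List.mem_cons_of_mem _ hB)]

lemma cBR_prod {L : List (Matrix (Fin 3) (Fin 3) K)} (h : ∀ A ∈ L, A ∈ UTset 3 K) :
    cBR L.prod = (L.map cBR).prod := by
  induction L with
  | nil => simpa using cBR_one
  | cons A L ih =>
    rw [List.prod_cons, List.map_cons, List.prod_cons,
      cBR_mul (h A (List.mem_cons_self))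
        (ut_listprod fun B hB => h B (List.mem_cons_of_mem _ hB)),
      ih fun B hB => h B (List.mem_cons_of_mem _ hB)]

lemma ut12_listprod {L : List (Matrix (Fin 3) (Fin 3) K)}
    (h : ∀ A ∈ L, A ∈ UTset 3 K ∧ A 1 2 = 0) : L.prod ∈ UTset 3 K ∧ L.prod 1 2 = 0 := by
  induction L with
  | nil => exact ⟨ut_one, by simp [Matrix.one_apply]⟩
  | cons A L ih =>
    obtain ⟨hP, hP12⟩ := ih fun B hB => h B (List.mem_cons_of_mem _ hB)
    obtain ⟨hA, hA12⟩ := h A (List.mem_cons_self)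
    rw [List.prod_cons]
    refine ⟨ut_mul hA hP, ?_⟩
    rw [Matrix.mul_apply, Fin.sum_univ_three]
    rw [hA 1 0 (by decide), hA12, hP12]
    ring

lemma ut01_listprod {L : List (Matrix (Fin 3) (Fin 3) K)}
    (h : ∀ A ∈ L, A ∈ UTset 3 K ∧ A 0 1 = 0) : L.prod ∈ UTset 3 K ∧ L.prod 0 1 = 0 := by
  induction L with
  | nil => exact ⟨ut_one, by simp [Matrix.one_apply]⟩
  | cons A L ih =>
    obtain ⟨hP, hP12⟩ := ih fun B hB => h B (List.mem_cons_of_mem _ hB)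
    obtain ⟨hA, hA12⟩ := h A (List.mem_cons_self)
    rw [List.prod_cons]
    refine ⟨ut_mul hA hP, ?_⟩
    rw [Matrix.mul_apply, Fin.sum_univ_three]
    rw [hP 2 1 (by decide), hP12, hA12]
    ring

lemma cO_prodA {L : List (Matrix (Fin 3) (Fin 3) K)}
    (h : ∀ A ∈ L, A ∈ UTset 3 K ∧ A 1 2 = 0) : cO L.prod = (L.map cO).prod := by
  induction L with
  | nil => simpa using cO_one
  | cons A L ih =>
    obtain ⟨hP, hP12⟩ := ut12_listprod fun B hB => h B (List.mem_cons_of_mem _ hB)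
    rw [List.prod_cons, List.map_cons, List.prod_cons,
      cO_mulA (h A (List.mem_cons_self)).1 hP (h A (List.mem_cons_self)).2 hP12,
      ih fun B hB => h B (List.mem_cons_of_mem _ hB)]

lemma cO_prodB {L : List (Matrix (Fin 3) (Fin 3) K)}
    (h : ∀ A ∈ L, A ∈ UTset 3 K ∧ A 0 1 = 0) : cO L.prod = (L.map cO).prod := by
  induction L with
  | nil => simpa using cO_one
  | cons A L ih =>
    obtain ⟨hP, hP01⟩ := ut01_listprod fun B hB => h B (List.mem_cons_of_mem _ hB)
    rw [List.prod_cons, List.map_cons, List.prod_cons,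
      cO_mulB (h A (List.mem_cons_self)).1 hP (h A (List.mem_cons_self)).2 hP01,
      ih fun B hB => h B (List.mem_cons_of_mem _ hB)]

lemma mlEval_01_cTL {α : Equiv.Perm (Fin n) → K} {a : Fin n → Matrix (Fin 3) (Fin 3) K}
    (ha : ∀ i, a i ∈ UTset 3 K) :
    (mlEval α a) 0 1 = (mlEval α fun i => cTL (a i)) 0 1 := by
  rw [mlEval, mlEval, Matrix.sum_apply, Matrix.sum_apply]
  refine Finset.sum_congr rfl fun σ _ => ?_
  rw [Matrix.smul_apply, Matrix.smul_apply]
  congr 1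
  have h1 : (List.ofFn fun i => cTL (a (σ i))).prod = cTL (List.ofFn fun i => a (σ i)).prod := by
    rw [cTL_prod (fun B hB => by
      rcases List.mem_ofFn.1 hB with ⟨m, rfl⟩
      exact ha _), List.map_ofFn]
    rfl
  rw [h1]
  simp [cTL]

lemma mlEval_12_cBR {α : Equiv.Perm (Fin n) → K} {a : Fin n → Matrix (Fin 3) (Fin 3) K}
    (ha : ∀ i, a i ∈ UTset 3 K) :
    (mlEval α a) 1 2 = (mlEval α fun i => cBR (a i)) 0 1 := by
  rw [mlEval, mlEval, Matrix.sum_apply, Matrix.sum_apply]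
  refine Finset.sum_congr rfl fun σ _ => ?_
  rw [Matrix.smul_apply, Matrix.smul_apply]
  congr 1
  have h1 : (List.ofFn fun i => cBR (a (σ i))).prod = cBR (List.ofFn fun i => a (σ i)).prod := by
    rw [cBR_prod (fun B hB => by
      rcases List.mem_ofFn.1 hB with ⟨m, rfl⟩
      exact ha _), List.map_ofFn]
    rfl
  rw [h1]
  simp [cBR]

lemma mlEval_02_cOA {α : Equiv.Perm (Fin n) → K} {a : Fin n → Matrix (Fin 3) (Fin 3) K}
    (ha : ∀ i, a i ∈ UTset 3 K ∧ a i 1 2 = 0) :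
    (mlEval α a) 0 2 = (mlEval α fun i => cO (a i)) 0 1 := by
  rw [mlEval, mlEval, Matrix.sum_apply, Matrix.sum_apply]
  refine Finset.sum_congr rfl fun σ _ => ?_
  rw [Matrix.smul_apply, Matrix.smul_apply]
  congr 1
  have h1 : (List.ofFn fun i => cO (a (σ i))).prod = cO (List.ofFn fun i => a (σ i)).prod := by
    rw [cO_prodA (fun B hB => by
      rcases List.mem_ofFn.1 hB with ⟨m, rfl⟩
      exact ha _), List.map_ofFn]
    rfl
  rw [h1]
  simp [cO]

lemma mlEval_02_cOB {α : Equiv.Perm (Fin n) → K} {a : Fin n → Matrix (Fin 3) (Fin 3) K}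
    (ha : ∀ i, a i ∈ UTset 3 K ∧ a i 0 1 = 0) :
    (mlEval α a) 0 2 = (mlEval α fun i => cO (a i)) 0 1 := by
  rw [mlEval, mlEval, Matrix.sum_apply, Matrix.sum_apply]
  refine Finset.sum_congr rfl fun σ _ => ?_
  rw [Matrix.smul_apply, Matrix.smul_apply]
  congr 1
  have h1 : (List.ofFn fun i => cO (a (σ i))).prod = cO (List.ofFn fun i => a (σ i)).prod := by
    rw [cO_prodB (fun B hB => by
      rcases List.mem_ofFn.1 hB with ⟨m, rfl⟩
      exact ha _), List.map_ofFn]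
    rfl
  rw [h1]
  simp [cO]

end cornersec
section mainsec
variable {K : Type*} [Field K] {n : ℕ}

def diag3 (d e g : K) : Matrix (Fin 3) (Fin 3) K := !![d,0,0;0,e,0;0,0,g]

lemma mem_UT3 {A : Matrix (Fin 3) (Fin 3) K} (h10 : A 1 0 = 0) (h20 : A 2 0 = 0)
    (h21 : A 2 1 = 0) : A ∈ UTset 3 K := by
  intro i j hij
  fin_cases i <;> fin_cases j <;>
    first
      | exact h10 | exact h20 | exact h21
      | exact absurd hij (by decide)

lemma constructJ (α : Equiv.Perm (Fin n) → K) (hc : (∑ σ : Equiv.Perm (Fin n), α σ) = 0)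
    (k : Fin n) (d e g : Fin n → K) (u v w : K) :
    ∃ a : Fin n → Matrix (Fin 3) (Fin 3) K, (∀ i, a i ∈ UTset 3 K) ∧
      (mlEval α a) 0 1 = u * psi α k d e ∧
      (mlEval α a) 1 2 = v * psi α k e g ∧
      (mlEval α a) 0 2 = w * psi α k d g ∧
      (∀ j, (mlEval α a) j j = 0) ∧ mlEval α a ∈ UTset 3 K := by
  classical
  set base : Fin n → Matrix (Fin 3) (Fin 3) K := fun i => diag3 (d i) (e i) (g i) with hbase
  set N1 : Matrix (Fin 3) (Fin 3) K := !![0,u,0;0,0,0;0,0,0] with hN1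
  set N2 : Matrix (Fin 3) (Fin 3) K := !![0,0,0;0,0,v;0,0,0] with hN2
  set N3 : Matrix (Fin 3) (Fin 3) K := !![0,0,w;0,0,0;0,0,0] with hN3
  set a : Fin n → Matrix (Fin 3) (Fin 3) K :=
    Function.update base k (base k + (N1 + (N2 + N3))) with ha
  have hbaseUT : ∀ i, base i ∈ UTset 3 K := fun i =>
    mem_UT3 (by simp [hbase, diag3, Matrix.vecHead, Matrix.vecTail]) (by simp [hbase, diag3, Matrix.vecHead, Matrix.vecTail]) (by simp [hbase, diag3, Matrix.vecHead, Matrix.vecTail])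
  have haUT : ∀ i, a i ∈ UTset 3 K := by
    intro i
    by_cases hik : i = k
    · rw [hik, ha, Function.update_self]
      refine mem_UT3 ?_ ?_ ?_ <;>
        simp [hbase, diag3, hN1, hN2, hN3, Matrix.add_apply, Matrix.vecHead, Matrix.vecTail]
    · rw [ha, Function.update_of_ne hik]
      exact hbaseUT i
  -- entries of a
  have ha_ne : ∀ i, i ≠ k → a i = diag3 (d i) (e i) (g i) := by
    intro i hik
    rw [ha, Function.update_of_ne hik]
  have ha_k : a k = base k + (N1 + (N2 + N3)) := by rw [ha, Function.update_self]
  have hak00 : a k 0 0 = d k := by rw [ha_k]; simp [hbase, diag3, hN1, hN2, hN3, Matrix.add_apply, Matrix.vecHead, Matrix.vecTail]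
  have hak11 : a k 1 1 = e k := by rw [ha_k]; simp [hbase, diag3, hN1, hN2, hN3, Matrix.add_apply, Matrix.vecHead, Matrix.vecTail]
  have hak22 : a k 2 2 = g k := by rw [ha_k]; simp [hbase, diag3, hN1, hN2, hN3, Matrix.add_apply, Matrix.vecHead, Matrix.vecTail]
  have hak01 : a k 0 1 = u := by rw [ha_k]; simp [hbase, diag3, hN1, hN2, hN3, Matrix.add_apply, Matrix.vecHead, Matrix.vecTail]
  have hak12 : a k 1 2 = v := by rw [ha_k]; simp [hbase, diag3, hN1, hN2, hN3, Matrix.add_apply, Matrix.vecHead, Matrix.vecTail]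
  refine ⟨a, haUT, ?_, ?_, ?_, ?_, mlEval_mem_UT haUT⟩
  · -- (0,1) entry
    rw [mlEval_01_cTL haUT, lemC' α _ (fun i => by simp [cTL, Matrix.vecHead, Matrix.vecTail])]
    rw [Finset.sum_eq_single_of_mem k (Finset.mem_univ k) (fun j _ hjk => by
      rw [show cTL (a j) 0 1 = (0:K) from by simp [cTL, ha_ne j hjk, diag3, Matrix.vecHead, Matrix.vecTail], zero_mul])]
    have hco : cTL (a k) 0 1 = u := by simp [cTL, hak01, Matrix.vecHead, Matrix.vecTail]
    rw [hco]
    congr 1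
    refine psi_congr α k fun i hik => ?_
    simp [cTL, ha_ne i hik, diag3, Matrix.vecHead, Matrix.vecTail]
  · -- (1,2) entry
    rw [mlEval_12_cBR haUT, lemC' α _ (fun i => by simp [cBR, Matrix.vecHead, Matrix.vecTail])]
    rw [Finset.sum_eq_single_of_mem k (Finset.mem_univ k) (fun j _ hjk => by
      rw [show cBR (a j) 0 1 = (0:K) from by simp [cBR, ha_ne j hjk, diag3, Matrix.vecHead, Matrix.vecTail], zero_mul])]
    have hco : cBR (a k) 0 1 = v := by simp [cBR, hak12, Matrix.vecHead, Matrix.vecTail]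
    rw [hco]
    congr 1
    refine psi_congr α k fun i hik => ?_
    simp [cBR, ha_ne i hik, diag3, Matrix.vecHead, Matrix.vecTail]
  · -- (0,2) entry
    have hsplit : mlEval α a
        = mlEval α base + (mlEval α (Function.update base k N1)
          + (mlEval α (Function.update base k N2) + mlEval α (Function.update base k N3))) := by
      rw [ha, mlEval_update_add, mlEval_update_add, mlEval_update_add, Function.update_eq_self]
    have upd_ne : ∀ (N : Matrix (Fin 3) (Fin 3) K) (i : Fin n), i ≠ k →
        Function.update base k N i = diag3 (d i) (e i) (g i) := fun N i hik => by
      rw [Function.update_of_ne hik]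
    -- piece 0
    have p0 : (mlEval α base) 0 2 = 0 := by
      rw [mlEval_02_cOA (fun i => ⟨hbaseUT i, by simp [hbase, diag3, Matrix.vecHead, Matrix.vecTail]⟩),
        lemC' α _ (fun i => by simp [cO, Matrix.vecHead, Matrix.vecTail])]
      refine Finset.sum_eq_zero fun j _ => ?_
      rw [show cO (base j) 0 1 = (0:K) from by simp [cO, hbase, diag3, Matrix.vecHead, Matrix.vecTail], zero_mul]
    -- generic vanishing piece
    have pvan : ∀ N : Matrix (Fin 3) (Fin 3) K, N ∈ UTset 3 K → N 1 2 = 0 → N 0 2 = 0 →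
        (mlEval α (Function.update base k N)) 0 2 = 0 := by
      intro N hNut hN12 hN02
      rw [mlEval_02_cOA (fun i => ?_), lemC' α _ (fun i => by simp [cO, Matrix.vecHead, Matrix.vecTail])]
      · refine Finset.sum_eq_zero fun j _ => ?_
        by_cases hjk : j = k
        · rw [hjk, show cO (Function.update base k N k) 0 1 = (0:K) from by
            simp [cO, Function.update_self, hN02, Matrix.vecHead, Matrix.vecTail], zero_mul]
        · rw [show cO (Function.update base k N j) 0 1 = (0:K) from by
            simp [cO, upd_ne N j hjk, diag3, Matrix.vecHead, Matrix.vecTail], zero_mul]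
      · by_cases hik : i = k
        · rw [hik, Function.update_self]
          exact ⟨hNut, hN12⟩
        · rw [upd_ne N i hik]
          exact ⟨mem_UT3 (by simp [diag3, Matrix.vecHead, Matrix.vecTail]) (by simp [diag3, Matrix.vecHead, Matrix.vecTail]) (by simp [diag3, Matrix.vecHead, Matrix.vecTail]), by simp [diag3, Matrix.vecHead, Matrix.vecTail]⟩
    have p1 : (mlEval α (Function.update base k N1)) 0 2 = 0 :=
      pvan N1 (mem_UT3 (by simp [hN1, Matrix.vecHead, Matrix.vecTail]) (by simp [hN1, Matrix.vecHead, Matrix.vecTail]) (by simp [hN1, Matrix.vecHead, Matrix.vecTail]))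
        (by simp [hN1, Matrix.vecHead, Matrix.vecTail]) (by simp [hN1, Matrix.vecHead, Matrix.vecTail])
    -- piece 2 : use the B variant
    have p2 : (mlEval α (Function.update base k N2)) 0 2 = 0 := by
      rw [mlEval_02_cOB (fun i => ?_), lemC' α _ (fun i => by simp [cO, Matrix.vecHead, Matrix.vecTail])]
      · refine Finset.sum_eq_zero fun j _ => ?_
        by_cases hjk : j = k
        · rw [hjk, show cO (Function.update base k N2 k) 0 1 = (0:K) from by
            simp [cO, Function.update_self, hN2, Matrix.vecHead, Matrix.vecTail], zero_mul]
        · rw [show cO (Function.update base k N2 j) 0 1 = (0:K) from by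
            simp [cO, upd_ne N2 j hjk, diag3, Matrix.vecHead, Matrix.vecTail], zero_mul]
      · by_cases hik : i = k
        · rw [hik, Function.update_self]
          exact ⟨mem_UT3 (by simp [hN2, Matrix.vecHead, Matrix.vecTail]) (by simp [hN2, Matrix.vecHead, Matrix.vecTail]) (by simp [hN2, Matrix.vecHead, Matrix.vecTail]), by simp [hN2, Matrix.vecHead, Matrix.vecTail]⟩
        · rw [upd_ne N2 i hik]
          exact ⟨mem_UT3 (by simp [diag3, Matrix.vecHead, Matrix.vecTail]) (by simp [diag3, Matrix.vecHead, Matrix.vecTail]) (by simp [diag3, Matrix.vecHead, Matrix.vecTail]), by simp [diag3, Matrix.vecHead, Matrix.vecTail]⟩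
    -- piece 3 : the main term
    have p3 : (mlEval α (Function.update base k N3)) 0 2 = w * psi α k d g := by
      have hmem : ∀ i, Function.update base k N3 i ∈ UTset 3 K ∧
          Function.update base k N3 i 1 2 = 0 := by
        intro i
        by_cases hik : i = k
        · rw [hik, Function.update_self]
          exact ⟨mem_UT3 (by simp [hN3, Matrix.vecHead, Matrix.vecTail]) (by simp [hN3, Matrix.vecHead, Matrix.vecTail]) (by simp [hN3, Matrix.vecHead, Matrix.vecTail]), by simp [hN3, Matrix.vecHead, Matrix.vecTail]⟩
        · rw [upd_ne N3 i hik]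
          exact ⟨mem_UT3 (by simp [diag3, Matrix.vecHead, Matrix.vecTail]) (by simp [diag3, Matrix.vecHead, Matrix.vecTail]) (by simp [diag3, Matrix.vecHead, Matrix.vecTail]), by simp [diag3, Matrix.vecHead, Matrix.vecTail]⟩
      rw [mlEval_02_cOA hmem, lemC' α _ (fun i => by simp [cO, Matrix.vecHead, Matrix.vecTail])]
      rw [Finset.sum_eq_single_of_mem k (Finset.mem_univ k) (fun j _ hjk => by
        rw [show cO (Function.update base k N3 j) 0 1 = (0:K) from by
          simp [cO, upd_ne N3 j hjk, diag3, Matrix.vecHead, Matrix.vecTail], zero_mul])]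
      have hco : cO (Function.update base k N3 k) 0 1 = w := by
        simp [cO, Function.update_self, hN3, Matrix.vecHead, Matrix.vecTail]
      rw [hco]
      congr 1
      refine psi_congr α k fun i hik => ?_
      simp [cO, upd_ne N3 i hik, diag3, Matrix.vecHead, Matrix.vecTail]
    rw [hsplit, Matrix.add_apply, Matrix.add_apply, Matrix.add_apply, p0, p1, p2, p3]
    ring
  · -- diagonal
    intro j
    rw [mlEval_diag haUT, hc, zero_mul]

end mainsec
end PROOFDEV

theorem stmt_11 {K : Type*} [Field K] [Infinite K] {n : ℕ} (hn : 0 < n)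
    (α : Equiv.Perm (Fin n) → K) :
    mlImage α (UTset 3 K) = {0} ∨ mlImage α (UTset 3 K) = Jset 3 K 2 ∨
      mlImage α (UTset 3 K) = Jset 3 K 1 ∨
      mlImage α (UTset 3 K) = UTset 3 K := by
  classical
  set k0 : Fin n := ⟨0, hn⟩ with hk0
  by_cases hc : (∑ σ : Equiv.Perm (Fin n), α σ) = 0
  · by_cases h0 : ∀ a : Fin n → Matrix (Fin 3) (Fin 3) K,
        (∀ i, a i ∈ UTset 3 K) → mlEval α a = 0
    · left
      ext X
      simp only [Set.mem_singleton_iff]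
      constructor
      · rintro ⟨a, ha, rfl⟩
        exact h0 a ha
      · rintro rfl
        exact ⟨fun _ => 0, fun i i' j' _ => rfl, (h0 _ fun i i' j' _ => rfl).symm⟩
    · by_cases h2 : ∀ a : Fin n → Matrix (Fin 3) (Fin 3) K,
          (∀ i, a i ∈ UTset 3 K) → mlEval α a ∈ Jset 3 K 2
      · right; left
        ext B
        constructor
        · rintro ⟨a, ha, rfl⟩
          exact h2 a ha
        · intro hB
          push_neg at h0
          obtain ⟨a0, ha0, hM⟩ := h0
          have hMJ := h2 a0 ha0
          have ht : mlEval α a0 0 2 ≠ 0 := by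
            intro h02
            apply hM
            ext i j
            rw [Matrix.zero_apply]
            by_cases hij : (j : ℕ) < (i : ℕ) + 2
            · exact hMJ i j hij
            · have hi : i = 0 := by
                ext
                omega
              have hj : j = 2 := by
                ext
                omega
              rw [hi, hj, h02]
          refine ⟨Function.update a0 k0 ((B 0 2 / mlEval α a0 0 2) • a0 k0), fun i => ?_, ?_⟩
          · by_cases hi : i = k0
            · rw [hi, Function.update_self]
              exact ut_smul _ (ha0 k0)
            · rw [Function.update_of_ne hi]
              exact ha0 i
          · rw [mlEval_update_smul, Function.update_eq_self]
            ext i j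
            rw [Matrix.smul_apply, smul_eq_mul]
            by_cases hij : (j : ℕ) < (i : ℕ) + 2
            · rw [hB i j hij, hMJ i j hij, mul_zero]
            · have hi : i = 0 := by ext; omega
              have hj : j = 2 := by ext; omega
              rw [hi, hj, div_mul_cancel₀ _ ht]
      · right; right; left
        push_neg at h2
        obtain ⟨a0, ha0, hM2⟩ := h2
        have haUT := mlEval_mem_UT (α := α) ha0
        have hdiag : ∀ j, (mlEval α a0) j j = 0 := fun j => by
          rw [mlEval_diag ha0, hc, zero_mul]
        have hor : (mlEval α a0) 0 1 ≠ 0 ∨ (mlEval α a0) 1 2 ≠ 0 := by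
          by_contra hcon
          push_neg at hcon
          apply hM2
          intro i j hij
          fin_cases i <;> fin_cases j <;>
            first
              | exact hcon.1 | exact hcon.2 | exact hdiag _
              | exact haUT _ _ (by decide)
              | exact absurd hij (by decide)
        have hpsi : ∃ (k : Fin n) (d0 e0 : Fin n → K), psi α k d0 e0 ≠ 0 := by
          rcases hor with h01 | h12
          · rw [mlEval_01_cTL ha0, lemC' α _ (fun i => by simp [cTL])] at h01
            obtain ⟨k, _, hk⟩ := Finset.exists_ne_zero_of_sum_ne_zero h01
            exact ⟨k, _, _, fun hz => hk (by rw [hz, mul_zero])⟩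
          · rw [mlEval_12_cBR ha0, lemC' α _ (fun i => by simp [cBR])] at h12
            obtain ⟨k, _, hk⟩ := Finset.exists_ne_zero_of_sum_ne_zero h12
            exact ⟨k, _, _, fun hz => hk (by rw [hz, mul_zero])⟩
        obtain ⟨k, d0, e0, hp0⟩ := hpsi
        obtain ⟨d, e, g, hde, heg, hdg⟩ := poly_step α hp0
        ext B
        constructor
        · rintro ⟨a, ha, rfl⟩
          intro i j hij
          rcases lt_or_eq_of_le (show (j : ℕ) ≤ (i : ℕ) by omega) with hlt | heq
          · exact mlEval_mem_UT ha i j (by rwa [Fin.lt_def])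
          · have : j = i := by ext; exact heq
            rw [this, mlEval_diag ha, hc, zero_mul]
        · intro hB
          obtain ⟨a, haUT', h01, h12, h02, hdiag', hUT'⟩ :=
            constructJ α hc k d e g (B 0 1 / psi α k d e) (B 1 2 / psi α k e g)
              (B 0 2 / psi α k d g)
          refine ⟨a, haUT', ?_⟩
          ext i j
          fin_cases i <;> fin_cases j
          · exact ((hdiag' 0).trans (hB 0 0 (by decide)).symm).symm
          · exact (h01.trans (div_mul_cancel₀ _ hde)).symm
          · exact (h02.trans (div_mul_cancel₀ _ hdg)).symm
          · exact ((hUT' 1 0 (by decide)).trans (hB 1 0 (by decide)).symm).symm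
          · exact ((hdiag' 1).trans (hB 1 1 (by decide)).symm).symm
          · exact (h12.trans (div_mul_cancel₀ _ heg)).symm
          · exact ((hUT' 2 0 (by decide)).trans (hB 2 0 (by decide)).symm).symm
          · exact ((hUT' 2 1 (by decide)).trans (hB 2 1 (by decide)).symm).symm
          · exact ((hdiag' 2).trans (hB 2 2 (by decide)).symm).symm
  · right; right; right
    ext X
    constructor
    · rintro ⟨a, ha, rfl⟩
      exact mlEval_mem_UT ha
    · intro hX
      refine ⟨fun j => if j = k0 then (∑ σ : Equiv.Perm (Fin n), α σ)⁻¹ • X else 1,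
        fun j => ?_, ?_⟩
      · by_cases hj : j = k0
        · simp only [if_pos hj]
          exact ut_smul _ hX
        · simp only [if_neg hj]
          exact ut_one
      · rw [mlEval_single, smul_smul, mul_inv_cancel₀ hc, one_smul]
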